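/- Let A = sI − B where B is an m×m matrix with nonnegative entries and s > ρ(B). Then the function I ↦ tr(log A[I]) on subsets of {1,...,m} is submodular, where log A := (log s)·Id − Σ_{i≥1} Bⁱ/(i sⁱ). -/

import Mathlib

open Matrix

/-- The principal submatrix of `B` with rows and columns in `I`. -/
def rsub {m : ℕ} (B : Matrix (Fin m) (Fin m) ℝ) (I : Finset (Fin m)) :
    Matrix I I ℝ :=
  B.submatrix (fun i : I => (i : Fin m)) (fun i : I => (i : Fin m))

/-- `log (s·Id − B)`, defined by the series
`(log s)·Id − Σ_{i≥1} Bⁱ/(i sⁱ)`, absolutely convergent when `s > ρ(B)`. -/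
noncomputable def mLog {n : Type*} [Fintype n] [DecidableEq n]
    (s : ℝ) (B : Matrix n n ℝ) : Matrix n n ℝ :=
  (Real.log s) • (1 : Matrix n n ℝ) -
    ∑' i : ℕ, ((1 : ℝ) / ((i + 1) * s ^ (i + 1))) • B ^ (i + 1)

open Filter in


lemma exists_geom_bound {m : ℕ} (B : Matrix (Fin m) (Fin m) ℝ) (s : ℝ)
    (hs : spectralRadius ℂ (B.map (Complex.ofReal)) < ENNReal.ofReal s) :
    ∃ C r : ℝ, 0 ≤ C ∧ 0 < r ∧ r < s ∧ ∀ n i j, (B ^ n) i j ≤ C * r ^ n := by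
  letI := Matrix.linftyOpNormedRing (n := Fin m) (α := ℂ)
  letI := Matrix.linftyOpNormedAlgebra (n := Fin m) (α := ℂ) (R := ℂ)
  haveI : CompleteSpace (Matrix (Fin m) (Fin m) ℂ) :=
    FiniteDimensional.complete ℂ _
  have hs0 : 0 < s := by
    by_contra h
    push_neg at h
    rw [ENNReal.ofReal_eq_zero.2 h] at hs
    exact (not_lt_of_ge zero_le) hs
  set a := B.map (Complex.ofReal) with ha
  -- pick r between ρ and s
  obtain ⟨r, hr0, hρr, hrs⟩ := ENNReal.lt_iff_exists_real_btwn.mp hs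
  have hrs' : r < s := by
    have := (ENNReal.ofReal_lt_ofReal_iff hs0).mp hrs
    exact this
  set r2 : ℝ := max r (s / 2) with hr2def
  have hr2pos : 0 < r2 := lt_max_of_lt_right (by linarith)
  have hr2s : r2 < s := max_lt hrs' (by linarith)
  have hρr2 : spectralRadius ℂ a < ENNReal.ofReal r2 :=
    lt_of_lt_of_le hρr (ENNReal.ofReal_le_ofReal (le_max_left _ _))
  -- Gelfand
  have hgel := spectrum.pow_nnnorm_pow_one_div_tendsto_nhds_spectralRadius a
  have hev : ∀ᶠ n : ℕ in atTop, (‖a ^ n‖₊ : ENNReal) ^ (1 / (n:ℝ)) < ENNReal.ofReal r2 :=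
    hgel.eventually_lt_const hρr2
  obtain ⟨N, hN⟩ := hev.exists_forall_of_atTop
  have hbound : ∀ n, N ≤ n → 1 ≤ n → ‖a ^ n‖ ≤ r2 ^ n := by
    intro n hn hn1
    have h := hN n hn
    have hne : (n:ℝ) ≠ 0 := by positivity
    have h2 : ((‖a ^ n‖₊ : ENNReal) ^ (1 / (n:ℝ))) ^ (n:ℝ) < (ENNReal.ofReal r2) ^ (n:ℝ) := by
      apply ENNReal.rpow_lt_rpow h (by positivity)
    rw [← ENNReal.rpow_mul, one_div_mul_cancel hne, ENNReal.rpow_one] at h2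
    rw [ENNReal.ofReal_rpow_of_pos hr2pos] at h2
    have := (ENNReal.lt_ofReal_iff_toReal_lt (by simp)).mp h2
    simpa [Real.rpow_natCast] using this.le
  -- assemble C
  refine ⟨1 + ∑ k ∈ Finset.range (N + 1), ‖a ^ k‖ / r2 ^ k, r2, by positivity, hr2pos, hr2s, ?_⟩
  intro n i j
  have hentry : (B ^ n) i j ≤ ‖a ^ n‖ := by
    have h1 : ‖(a ^ n) i j‖ ≤ ‖a ^ n‖ := by
      have := Matrix.linfty_opNNNorm_def (a ^ n)
      have h2 : ‖(a ^ n) i j‖₊ ≤ ‖a ^ n‖₊ := by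
        rw [this]
        calc ‖(a ^ n) i j‖₊ ≤ ∑ k, ‖(a ^ n) i k‖₊ :=
              Finset.single_le_sum (f := fun k => ‖(a ^ n) i k‖₊) (fun _ _ => zero_le)
                (Finset.mem_univ j)
          _ ≤ _ := Finset.le_sup (f := fun i => ∑ k, ‖(a ^ n) i k‖₊) (Finset.mem_univ i)
      exact h2
    have hmappow : a ^ n = (B ^ n).map Complex.ofReal := by
      rw [ha]
      have h5 := map_pow (Complex.ofRealHom.mapMatrix : Matrix (Fin m) (Fin m) ℝ →+* _) B n
      ext i' j'
      have h6 := congrFun (congrFun h5 i') j'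
      exact h6.symm
    have hmap : (a ^ n) i j = ((B ^ n) i j : ℂ) := by rw [hmappow]; rfl
    calc (B ^ n) i j ≤ |(B ^ n) i j| := le_abs_self _
      _ = ‖(a ^ n) i j‖ := by rw [hmap, Complex.norm_real, Real.norm_eq_abs]
      _ ≤ ‖a ^ n‖ := h1
  have hsmall : n ∈ Finset.range (N + 1) → (B ^ n) i j ≤ (1 + ∑ k ∈ Finset.range (N + 1), ‖a ^ k‖ / r2 ^ k) * r2 ^ n := by
    intro hmem
    have h3 : ‖a ^ n‖ / r2 ^ n ≤ ∑ k ∈ Finset.range (N + 1), ‖a ^ k‖ / r2 ^ k :=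
      Finset.single_le_sum (f := fun k => ‖a ^ k‖ / r2 ^ k)
        (fun k _ => div_nonneg (norm_nonneg _) (pow_nonneg hr2pos.le k)) hmem
    have h4 : ‖a ^ n‖ ≤ (∑ k ∈ Finset.range (N + 1), ‖a ^ k‖ / r2 ^ k) * r2 ^ n := by
      rw [div_le_iff₀ (pow_pos hr2pos n)] at h3
      linarith
    refine le_trans hentry (le_trans h4 ?_)
    have : (0:ℝ) ≤ r2 ^ n := (pow_pos hr2pos n).le
    nlinarith
  rcases le_or_gt N n with hn | hn
  · rcases Nat.eq_zero_or_pos n with rfl | hn1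
    · exact hsmall (Finset.mem_range.mpr (by omega))
    · calc (B ^ n) i j ≤ ‖a ^ n‖ := hentry
        _ ≤ r2 ^ n := hbound n hn hn1
        _ ≤ (1 + ∑ k ∈ Finset.range (N + 1), ‖a ^ k‖ / r2 ^ k) * r2 ^ n := by
            nlinarith [pow_pos hr2pos n, Finset.sum_nonneg (fun k (_ : k ∈ Finset.range (N+1)) => div_nonneg (norm_nonneg (a ^ k)) (pow_nonneg hr2pos.le k))]
  · exact hsmall (Finset.mem_range.mpr (by omega))

variable {m : ℕ}

/-- Masked matrix: entries of `B` with both indices in `K`, else `0`. -/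
def mask (B : Matrix (Fin m) (Fin m) ℝ) (K : Finset (Fin m)) : Matrix (Fin m) (Fin m) ℝ :=
  Matrix.of fun i j => if i ∈ K ∧ j ∈ K then B i j else 0

lemma pow_entry_nonneg {X : Matrix (Fin m) (Fin m) ℝ} (hX : ∀ i j, 0 ≤ X i j) :
    ∀ n i j, 0 ≤ (X ^ n) i j := by
  intro n
  induction n with
  | zero => intro i j; simp [Matrix.one_apply]; positivity
  | succ n ih =>
    intro i j
    rw [pow_succ, Matrix.mul_apply]
    exact Finset.sum_nonneg fun k _ => mul_nonneg (ih i k) (hX k j)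

lemma pow_entry_le {X Y : Matrix (Fin m) (Fin m) ℝ} (hX : ∀ i j, 0 ≤ X i j)
    (hXY : ∀ i j, X i j ≤ Y i j) : ∀ n i j, (X ^ n) i j ≤ (Y ^ n) i j := by
  intro n
  induction n with
  | zero => intro i j; simp
  | succ n ih =>
    intro i j
    rw [pow_succ, pow_succ, Matrix.mul_apply, Matrix.mul_apply]
    refine Finset.sum_le_sum fun k _ => ?_
    have h0 : 0 ≤ (X ^ n) i k := pow_entry_nonneg hX n i k
    have h1 : 0 ≤ X k j := hX k j
    have := hXY k j
    have := ih i k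
    nlinarith

lemma mask_nonneg {B : Matrix (Fin m) (Fin m) ℝ} (hB : ∀ i j, 0 ≤ B i j) (K : Finset (Fin m)) :
    ∀ i j, 0 ≤ mask B K i j := by
  intro i j; unfold mask; dsimp; split
  · exact hB i j
  · exact le_rfl

lemma mask_le {B : Matrix (Fin m) (Fin m) ℝ} (hB : ∀ i j, 0 ≤ B i j) (K : Finset (Fin m)) :
    ∀ i j, mask B K i j ≤ B i j := by
  intro i j; unfold mask; dsimp; split
  · exact le_rfl
  · exact hB i j

lemma rsub_pow_entry (B : Matrix (Fin m) (Fin m) ℝ) (K : Finset (Fin m)) :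
    ∀ n (i j : K), ((rsub B K) ^ n) i j = ((mask B K) ^ n) (i : Fin m) (j : Fin m) := by
  intro n
  induction n with
  | zero =>
    intro i j
    simp only [pow_zero, Matrix.one_apply]
    split_ifs with h1 h2 h2
    · rfl
    · exact absurd (congrArg Subtype.val h1) h2
    · exact absurd (Subtype.ext h2) h1
    · rfl
  | succ n ih =>
    intro i j
    rw [pow_succ, pow_succ, Matrix.mul_apply, Matrix.mul_apply]
    have hzero : ∀ k ∈ Finset.univ, k ∉ K →
        ((mask B K) ^ n) (i : Fin m) k * (mask B K) k (j : Fin m) = 0 := by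
      intro k _ hk
      have : (mask B K) k (j : Fin m) = 0 := by
        unfold mask; dsimp; rw [if_neg]; tauto
      rw [this, mul_zero]
    rw [← Finset.sum_subset (K.subset_univ) hzero, ← Finset.sum_coe_sort K]
    refine Finset.sum_congr rfl fun k _ => ?_
    rw [ih i k]
    congr 1
    show B (k : Fin m) (j : Fin m) = _
    unfold mask; dsimp; rw [if_pos ⟨k.2, j.2⟩]

lemma trace_rsub_pow (B : Matrix (Fin m) (Fin m) ℝ) (K : Finset (Fin m)) (p : ℕ) :
    Matrix.trace ((rsub B K) ^ (p + 1)) = Matrix.trace ((mask B K) ^ (p + 1)) := by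
  rw [Matrix.trace, Matrix.trace]
  have h1 : ∑ i : K, ((rsub B K) ^ (p + 1)).diag i
      = ∑ i : K, ((mask B K) ^ (p + 1)) (i : Fin m) (i : Fin m) :=
    Finset.sum_congr rfl fun i _ => rsub_pow_entry B K (p + 1) i i
  rw [h1, Finset.sum_coe_sort K (fun i => ((mask B K) ^ (p + 1)) i i)]
  symm
  refine Finset.sum_subset (K.subset_univ) ?_ |>.symm
  intro i _ hi
  show ((mask B K) ^ (p + 1)) i i = 0
  rw [pow_succ', Matrix.mul_apply]
  refine Finset.sum_eq_zero fun k _ => ?_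
  have : mask B K i k = 0 := by unfold mask; dsimp; rw [if_neg]; tauto
  rw [this, zero_mul]

/-- product of the entries of `M` along the walk `i, c 0, c 1, ..., c (n-1)`. -/
def stepProd {n : ℕ} (M : Matrix (Fin m) (Fin m) ℝ) (i : Fin m) (c : Fin n → Fin m) : ℝ :=
  ∏ k : Fin n, M ((Fin.cons i c : Fin (n+1) → Fin m) k.castSucc) (c k)

lemma pow_apply_walk (M : Matrix (Fin m) (Fin m) ℝ) :
    ∀ (n : ℕ) (i j : Fin m), (M ^ n) i j =
      ∑ c : Fin n → Fin m, if (Fin.cons i c : Fin (n+1) → Fin m) (Fin.last n) = j then stepProd M i c else 0 := by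
  intro n
  induction n with
  | zero =>
    intro i j
    rw [Fintype.sum_unique]
    simp [stepProd, Matrix.one_apply, Fin.last]
  | succ n ih =>
    intro i j
    rw [pow_succ', Matrix.mul_apply]
    have hre : ∀ g : (Fin (n+1) → Fin m) → ℝ,
        ∑ c, g c = ∑ t : Fin m, ∑ c : Fin n → Fin m, g (Fin.cons t c) := by
      intro g
      rw [← Equiv.sum_comp (Fin.consEquiv (fun _ : Fin (n+1) => Fin m)) g, Fintype.sum_prod_type]
      rfl
    rw [hre]
    refine Finset.sum_congr rfl fun t _ => ?_
    rw [ih t j, Finset.mul_sum]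
    refine Finset.sum_congr rfl fun c _ => ?_
    have hlast : (Fin.cons i (Fin.cons t c) : Fin (n+2) → Fin m) (Fin.last (n+1)) = (Fin.cons t c : Fin (n+1) → Fin m) (Fin.last n) := by
      rw [← Fin.succ_last, Fin.cons_succ]
    have hprod : stepProd M i (Fin.cons t c : Fin (n+1) → Fin m) = M i t * stepProd M t c := by
      unfold stepProd
      rw [Fin.prod_univ_succ]
      have h0 : M ((Fin.cons i (Fin.cons t c) : Fin (n+2) → Fin m) ((0 : Fin (n+1)).castSucc))
          ((Fin.cons t c : Fin (n+1) → Fin m) (0 : Fin (n+1))) = M i t := by simp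
      rw [h0]
      refine congrArg (fun x => M i t * x) (Finset.prod_congr rfl fun k _ => ?_)
      show M ((Fin.cons i (Fin.cons t c) : Fin (n+2) → Fin m) (k.succ.castSucc))
          ((Fin.cons t c : Fin (n+1) → Fin m) k.succ)
        = M ((Fin.cons t c : Fin (n+1) → Fin m) k.castSucc) (c k)
      rw [← Fin.succ_castSucc, Fin.cons_succ, Fin.cons_succ]
    rw [hlast, hprod, mul_ite, mul_zero]

lemma stepProd_nonneg {n : ℕ} {M : Matrix (Fin m) (Fin m) ℝ} (hM : ∀ i j, 0 ≤ M i j)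
    (i : Fin m) (c : Fin n → Fin m) : 0 ≤ stepProd M i c :=
  Finset.prod_nonneg fun k _ => hM _ _

lemma stepProd_mask {p : ℕ} (B : Matrix (Fin m) (Fin m) ℝ) (K : Finset (Fin m))
    (i : Fin m) (c : Fin (p+1) → Fin m) :
    stepProd (mask B K) i c =
      if ∀ t : Fin (p+2), (Fin.cons i c : Fin (p+2) → Fin m) t ∈ K then stepProd B i c else 0 := by
  by_cases h : ∀ t : Fin (p+2), (Fin.cons i c : Fin (p+2) → Fin m) t ∈ K
  · rw [if_pos h]
    refine Finset.prod_congr rfl fun k _ => ?_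
    unfold mask
    dsimp
    rw [if_pos]
    constructor
    · exact h k.castSucc
    · have := h k.succ
      rwa [Fin.cons_succ] at this
  · rw [if_neg h]
    push_neg at h
    obtain ⟨t, ht⟩ := h
    -- each index of the walk appears in some factor
    rcases Fin.eq_zero_or_eq_succ t with rfl | ⟨u, rfl⟩
    · refine Finset.prod_eq_zero (Finset.mem_univ (0 : Fin (p+1))) ?_
      unfold mask
      dsimp
      rw [if_neg]
      intro hc
      exact ht (by simpa using hc.1)
    · refine Finset.prod_eq_zero (Finset.mem_univ u) ?_
      unfold mask
      dsimp
      rw [if_neg]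
      intro hc
      rw [Fin.cons_succ] at ht
      exact ht hc.2

lemma trace_mask_pow (B : Matrix (Fin m) (Fin m) ℝ) (K : Finset (Fin m)) (p : ℕ) :
    Matrix.trace ((mask B K) ^ (p + 1)) =
      ∑ i : Fin m, ∑ c : Fin (p+1) → Fin m,
        if ((Fin.cons i c : Fin (p+2) → Fin m) (Fin.last (p+1)) = i ∧
            ∀ t : Fin (p+2), (Fin.cons i c : Fin (p+2) → Fin m) t ∈ K)
        then stepProd B i c else 0 := by
  rw [Matrix.trace]
  refine Finset.sum_congr rfl fun i _ => ?_
  rw [Matrix.diag, pow_apply_walk (mask B K) (p+1) i i]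
  refine Finset.sum_congr rfl fun c _ => ?_
  rw [stepProd_mask B K i c]
  by_cases h1 : (Fin.cons i c : Fin (p+2) → Fin m) (Fin.last (p+1)) = i <;>
    by_cases h2 : ∀ t : Fin (p+2), (Fin.cons i c : Fin (p+2) → Fin m) t ∈ K <;>
    simp [h1, h2]

lemma trace_mask_pow_supermodular {B : Matrix (Fin m) (Fin m) ℝ} (hB : ∀ i j, 0 ≤ B i j)
    (I J : Finset (Fin m)) (p : ℕ) :
    Matrix.trace ((mask B I) ^ (p + 1)) + Matrix.trace ((mask B J) ^ (p + 1)) ≤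
      Matrix.trace ((mask B (I ∪ J)) ^ (p + 1)) + Matrix.trace ((mask B (I ∩ J)) ^ (p + 1)) := by
  rw [trace_mask_pow, trace_mask_pow, trace_mask_pow, trace_mask_pow,
    ← Finset.sum_add_distrib, ← Finset.sum_add_distrib]
  refine Finset.sum_le_sum fun i _ => ?_
  rw [← Finset.sum_add_distrib, ← Finset.sum_add_distrib]
  refine Finset.sum_le_sum fun c _ => ?_
  set sfun : Fin (p+2) → Fin m := (Fin.cons i c : Fin (p+2) → Fin m) with hsfun
  have ht : 0 ≤ stepProd B i c := stepProd_nonneg hB i c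
  by_cases hQ : sfun (Fin.last (p+1)) = i
  · by_cases hI : ∀ t, sfun t ∈ I <;> by_cases hJ : ∀ t, sfun t ∈ J
    · have hU : ∀ t, sfun t ∈ I ∪ J := fun t => Finset.mem_union_left _ (hI t)
      have hN : ∀ t, sfun t ∈ I ∩ J := fun t => Finset.mem_inter.mpr ⟨hI t, hJ t⟩
      simp [hQ, hI, hJ, hU, hN]
    · have hU : ∀ t, sfun t ∈ I ∪ J := fun t => Finset.mem_union_left _ (hI t)
      have hN : ¬ ∀ t, sfun t ∈ I ∩ J := fun h => hJ fun t => (Finset.mem_inter.mp (h t)).2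
      simp [hQ, hI, hJ, hU, hN]
    · have hU : ∀ t, sfun t ∈ I ∪ J := fun t => Finset.mem_union_right _ (hJ t)
      have hN : ¬ ∀ t, sfun t ∈ I ∩ J := fun h => hI fun t => (Finset.mem_inter.mp (h t)).1
      simp [hQ, hI, hJ, hU, hN]
    · have hN : ¬ ∀ t, sfun t ∈ I ∩ J := fun h => hI fun t => (Finset.mem_inter.mp (h t)).1
      have h0 : (0:ℝ) ≤ if (sfun (Fin.last (p+1)) = i ∧ ∀ t, sfun t ∈ I ∪ J)
          then stepProd B i c else 0 := by
        split
        · exact ht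
        · exact le_rfl
      have h1 : (if (sfun (Fin.last (p+1)) = i ∧ ∀ t, sfun t ∈ I ∩ J)
          then stepProd B i c else 0) = 0 := if_neg (fun h => hN h.2)
      rw [if_neg (fun h => hI h.2), if_neg (fun h => hJ h.2), h1]
      linarith
  · simp [hQ]

section Assembly

variable {B : Matrix (Fin m) (Fin m) ℝ} {s C r : ℝ}

lemma coeff_pos (hs0 : 0 < s) (n : ℕ) : 0 < (1:ℝ) / ((n + 1) * s ^ (n + 1)) := by
  positivity

lemma coeff_mul_le (hs0 : 0 < s) (hC : 0 ≤ C) (hr : 0 < r) {x : ℝ} (n : ℕ)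
    (hx0 : 0 ≤ x) (hx : x ≤ C * r ^ (n + 1)) :
    |(1:ℝ) / ((n + 1) * s ^ (n + 1)) * x| ≤ (C * (r / s)) * (r / s) ^ n := by
  have h1 : (0:ℝ) < (n + 1 : ℝ) := by positivity
  have h2 : (0:ℝ) < s ^ (n + 1) := by positivity
  have hcoeff : (1:ℝ) / ((n + 1) * s ^ (n + 1)) ≤ 1 / s ^ (n + 1) := by
    rw [div_le_div_iff₀ (by positivity) h2]
    nlinarith
  have habs : |(1:ℝ) / ((n + 1) * s ^ (n + 1)) * x| = (1:ℝ) / ((n + 1) * s ^ (n + 1)) * x := by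
    rw [abs_of_nonneg]
    positivity
  rw [habs]
  calc (1:ℝ) / ((n + 1) * s ^ (n + 1)) * x ≤ 1 / s ^ (n + 1) * (C * r ^ (n + 1)) := by
        apply mul_le_mul hcoeff hx hx0
        positivity
    _ = (C * (r / s)) * (r / s) ^ n := by
        rw [div_pow r s n]
        field_simp
        ring
  
lemma summable_geom_bound (hs0 : 0 < s) (hC : 0 ≤ C) (hr : 0 < r) (hrs : r < s) :
    Summable (fun n : ℕ => (C * (r / s)) * (r / s) ^ n) :=
  (summable_geometric_of_lt_one (by positivity) (by rwa [div_lt_one hs0])).mul_left _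

lemma trace_mLog_eq (hB : ∀ i j, 0 ≤ B i j) (hs0 : 0 < s) (hC : 0 ≤ C) (hr : 0 < r)
    (hrs : r < s) (hpow : ∀ n i j, (B ^ n) i j ≤ C * r ^ n) (K : Finset (Fin m)) :
    Matrix.trace (mLog s (rsub B K)) = Real.log s * K.card -
      ∑' n : ℕ, (1:ℝ) / ((n + 1) * s ^ (n + 1)) * Matrix.trace ((mask B K) ^ (n + 1)) := by
  classical
  set g : ℕ → Matrix K K ℝ :=
    fun n => ((1 : ℝ) / ((n + 1) * s ^ (n + 1))) • (rsub B K) ^ (n + 1) with hg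
  have hentry : ∀ n (i j : K),
      g n i j = (1:ℝ) / ((n + 1) * s ^ (n + 1)) * ((mask B K) ^ (n + 1)) (i : Fin m) j := by
    intro n i j
    rw [hg]
    show ((1 : ℝ) / ((n + 1) * s ^ (n + 1))) * ((rsub B K) ^ (n + 1)) i j = _
    rw [rsub_pow_entry B K (n + 1) i j]
  have hmask0 : ∀ n (i j : Fin m), 0 ≤ ((mask B K) ^ n) i j :=
    fun n i j => pow_entry_nonneg (mask_nonneg hB K) n i j
  have hmaskC : ∀ n (i j : Fin m), ((mask B K) ^ n) i j ≤ C * r ^ n := fun n i j =>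
    le_trans (pow_entry_le (mask_nonneg hB K) (mask_le hB K) n i j) (hpow n i j)
  have hscal : ∀ (i j : K), Summable fun n => g n i j := by
    intro i j
    apply Summable.of_abs
    apply Summable.of_nonneg_of_le (fun n => abs_nonneg _) _ (summable_geom_bound hs0 hC hr hrs)
    intro n
    rw [hentry n i j]
    exact coeff_mul_le hs0 hC hr n (hmask0 (n+1) i j) (hmaskC (n+1) i j)
  set T : Matrix K K ℝ := Matrix.of fun i j => ∑' n, g n i j with hT
  have hhs : HasSum g T := by
    refine Pi.hasSum.mpr ?_
    intro i
    rw [Pi.hasSum]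
    intro j
    exact (hscal i j).hasSum
  have htsum : ∑' n, g n = T := hhs.tsum_eq
  have htr : Matrix.trace T = ∑' n, Matrix.trace (g n) := by
    rw [Matrix.trace]
    have h1 : ∀ i : K, T.diag i = ∑' n, g n i i := fun i => rfl
    calc ∑ i : K, T.diag i = ∑ i ∈ (Finset.univ : Finset K), ∑' n, g n i i :=
          Finset.sum_congr rfl fun i _ => h1 i
      _ = ∑' n, ∑ i ∈ (Finset.univ : Finset K), g n i i :=
          (Summable.tsum_finsetSum (fun i _ => hscal i i)).symm
      _ = ∑' n, Matrix.trace (g n) := rfl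
  have htrg : ∀ n, Matrix.trace (g n) =
      (1:ℝ) / ((n + 1) * s ^ (n + 1)) * Matrix.trace ((mask B K) ^ (n + 1)) := by
    intro n
    rw [hg]
    dsimp only
    rw [Matrix.trace_smul, smul_eq_mul, trace_rsub_pow B K n]
  rw [mLog, Matrix.trace_sub, Matrix.trace_smul, Matrix.trace_one, htsum, htr, smul_eq_mul,
    Fintype.card_coe]
  congr 1
  exact tsum_congr htrg

end Assembly


lemma summable_traceSeries {m : ℕ} {B : Matrix (Fin m) (Fin m) ℝ} {s C r : ℝ}
    (hB : ∀ i j, 0 ≤ B i j) (hs0 : 0 < s) (hC : 0 ≤ C) (hr : 0 < r)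
    (hrs : r < s) (hpow : ∀ n i j, (B ^ n) i j ≤ C * r ^ n) (K : Finset (Fin m)) :
    Summable fun n : ℕ =>
      (1:ℝ) / ((n + 1) * s ^ (n + 1)) * Matrix.trace ((mask B K) ^ (n + 1)) := by
  have hmask0 : ∀ n (i j : Fin m), 0 ≤ ((mask B K) ^ n) i j :=
    fun n i j => pow_entry_nonneg (mask_nonneg hB K) n i j
  have hmaskC : ∀ n (i j : Fin m), ((mask B K) ^ n) i j ≤ C * r ^ n := fun n i j =>
    le_trans (pow_entry_le (mask_nonneg hB K) (mask_le hB K) n i j) (hpow n i j)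
  have htr0 : ∀ n, 0 ≤ Matrix.trace ((mask B K) ^ n) := fun n =>
    Finset.sum_nonneg fun i _ => hmask0 n i i
  have htrC : ∀ n, Matrix.trace ((mask B K) ^ n) ≤ ((m : ℝ) * C) * r ^ n := by
    intro n
    calc Matrix.trace ((mask B K) ^ n) ≤ ∑ _i : Fin m, C * r ^ n :=
          Finset.sum_le_sum fun i _ => hmaskC n i i
      _ = ((m : ℝ) * C) * r ^ n := by simp [mul_assoc]
  apply Summable.of_abs
  apply Summable.of_nonneg_of_le (fun n => abs_nonneg _) _
    (summable_geom_bound hs0 (C := (m : ℝ) * C) (by positivity) hr hrs)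
  intro n
  exact coeff_mul_le hs0 (by positivity) hr n (htr0 (n+1)) (htrC (n+1))

/-- For a nonsingular M-matrix `A = s·Id − B` (with `B ≥ 0` entrywise and
`s > ρ(B)`), the set function `I ↦ tr (log A[I])` is submodular, where
`log A[I] = log (s·Id − B[I])` is given by the series above. -/
theorem trace_mmatrix_log_submodular {m : ℕ} (B : Matrix (Fin m) (Fin m) ℝ)
    (hB : ∀ i j, 0 ≤ B i j) (s : ℝ)
    (hs : spectralRadius ℂ (B.map (Complex.ofReal)) < ENNReal.ofReal s)
    (I J : Finset (Fin m)) :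
    Matrix.trace (mLog s (rsub B (I ∪ J))) + Matrix.trace (mLog s (rsub B (I ∩ J))) ≤
      Matrix.trace (mLog s (rsub B I)) + Matrix.trace (mLog s (rsub B J)) := by
  have hs0 : 0 < s := by
    by_contra h
    push_neg at h
    rw [ENNReal.ofReal_eq_zero.2 h] at hs
    exact (not_lt_of_ge zero_le) hs
  obtain ⟨C, r, hC, hr, hrs, hpow⟩ := exists_geom_bound B s hs
  rw [trace_mLog_eq hB hs0 hC hr hrs hpow (I ∪ J), trace_mLog_eq hB hs0 hC hr hrs hpow (I ∩ J),
    trace_mLog_eq hB hs0 hC hr hrs hpow I, trace_mLog_eq hB hs0 hC hr hrs hpow J]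
  have hcard : ((I ∪ J).card : ℝ) + ((I ∩ J).card : ℝ) = (I.card : ℝ) + (J.card : ℝ) := by
    exact_mod_cast congrArg (fun n : ℕ => (n : ℝ)) (Finset.card_union_add_card_inter I J)
  have hSI := summable_traceSeries hB hs0 hC hr hrs hpow I
  have hSJ := summable_traceSeries hB hs0 hC hr hrs hpow J
  have hSU := summable_traceSeries hB hs0 hC hr hrs hpow (I ∪ J)
  have hSN := summable_traceSeries hB hs0 hC hr hrs hpow (I ∩ J)
  have hkey : (∑' n : ℕ, (1:ℝ) / ((n + 1) * s ^ (n + 1)) * Matrix.trace ((mask B I) ^ (n + 1)))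
      + (∑' n : ℕ, (1:ℝ) / ((n + 1) * s ^ (n + 1)) * Matrix.trace ((mask B J) ^ (n + 1)))
      ≤ (∑' n : ℕ, (1:ℝ) / ((n + 1) * s ^ (n + 1)) * Matrix.trace ((mask B (I ∪ J)) ^ (n + 1)))
      + (∑' n : ℕ, (1:ℝ) / ((n + 1) * s ^ (n + 1)) * Matrix.trace ((mask B (I ∩ J)) ^ (n + 1))) := by
    rw [← Summable.tsum_add hSI hSJ, ← Summable.tsum_add hSU hSN]
    refine Summable.tsum_le_tsum (fun n => ?_) (hSI.add hSJ) (hSU.add hSN)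
    have hc : 0 ≤ (1:ℝ) / ((n + 1) * s ^ (n + 1)) := (coeff_pos hs0 n).le
    have := trace_mask_pow_supermodular hB I J n
    nlinarith [mul_le_mul_of_nonneg_left this hc]
  have hlogeq : Real.log s * ((I ∪ J).card : ℝ) + Real.log s * ((I ∩ J).card : ℝ)
      = Real.log s * (I.card : ℝ) + Real.log s * (J.card : ℝ) := by
    rw [← mul_add, ← mul_add, hcard]
  linarith [hkey, hlogeq]
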